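/- Let (x,y,z,w) ∈ ℝ⁴ generate a non-periodic solution of x_{n+4} = max{x_{n+3},x_{n+2},x_{n+1},0} - x_n. Then every neighbourhood of (x,y,z,w) in ℝ⁴ contains, for each N ∈ ℕ, a tuple of initial conditions generating a periodic solution of minimal period greater than N. -/
import Mathlib


/-- The solution of the recurrence with initial conditions given by a tuple. -/
noncomputable def sol (c : ℝ × ℝ × ℝ × ℝ) : ℕ → ℝ
  | 0 => 0
  | 1 => c.1
  | 2 => c.2.1
  | 3 => c.2.2.1
  | 4 => c.2.2.2
  | (n + 5) =>
    max (max (max (sol c (n + 4)) (sol c (n + 3))) (sol c (n + 2))) 0 - sol c (n + 1)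

def IsPeriodOf (p : ℕ) (a : ℕ → ℝ) : Prop := 1 ≤ p ∧ ∀ n ≥ 1, a (n + p) = a n

lemma sol_rec (c : ℝ × ℝ × ℝ × ℝ) (n : ℕ) (hn : 1 ≤ n) :
    sol c (n + 4) = max (max (max (sol c (n + 3)) (sol c (n + 2))) (sol c (n + 1))) 0 - sol c n := by
  rcases n with _ | m
  · omega
  · rfl

lemma sol_continuous : ∀ n, Continuous fun c : ℝ × ℝ × ℝ × ℝ => sol c n := by
  intro n
  induction n using Nat.strong_induction_on with
  | _ n ih =>
    match n with
    | 0 => simpa [sol] using continuous_const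
    | 1 => exact continuous_fst
    | 2 => exact continuous_snd.fst
    | 3 => exact continuous_snd.snd.fst
    | 4 => exact continuous_snd.snd.snd
    | (m + 5) =>
      have h4 := ih (m + 4) (by omega)
      have h3 := ih (m + 3) (by omega)
      have h2 := ih (m + 2) (by omega)
      have h1 := ih (m + 1) (by omega)
      show Continuous fun c : ℝ × ℝ × ℝ × ℝ =>
        max (max (max (sol c (m + 4)) (sol c (m + 3))) (sol c (m + 2))) 0 - sol c (m + 1)
      exact (((h4.max h3).max h2).max continuous_const).sub h1

theorem max4_choice (p q r : ℝ) : max (max (max p q) r) 0 = p ∨ max (max (max p q) r) 0 = q ∨ max (max (max p q) r) 0 = r ∨ max (max (max p q) r) 0 = 0 := by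
  rcases max_choice (max (max p q) r) 0 with h | h
  · rcases max_choice (max p q) r with h2 | h2
    · rcases max_choice p q with h3 | h3
      · exact Or.inl (by rw [h, h2, h3])
      · exact Or.inr (Or.inl (by rw [h, h2, h3]))
    · exact Or.inr (Or.inr (Or.inl (by rw [h, h2])))
  · exact Or.inr (Or.inr (Or.inr h))

theorem key (x0 x1 x2 x3 x4 x5 x6 x7 x8 x9 x10 x11 : ℝ)
    (h0 : x4 = max (max (max x3 x2) x1) 0 - x0)
    (h1 : x5 = max (max (max x4 x3) x2) 0 - x1)
    (h2 : x6 = max (max (max x5 x4) x3) 0 - x2)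
    (h3 : x7 = max (max (max x6 x5) x4) 0 - x3)
    (h4 : x8 = max (max (max x7 x6) x5) 0 - x4)
    (h5 : x9 = max (max (max x8 x7) x6) 0 - x5)
    (h6 : x10 = max (max (max x9 x8) x7) 0 - x6)
    (h7 : x11 = max (max (max x10 x9) x8) 0 - x7)
    : x11 ≤ x0 ∨ x11 ≤ x1 ∨ x11 ≤ x2 ∨ x11 ≤ x3 ∨ x11 ≤ x4 ∨ x11 ≤ x5 ∨ x11 ≤ x6 ∨ x11 ≤ x7 ∨ x11 ≤ x8 ∨ x11 ≤ x9 ∨ x11 ≤ x10 ∨ x11 ≤ (0:ℝ) := by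
  have ha0 : x3 ≤ max (max (max x3 x2) x1) 0 := le_max_of_le_left (le_max_of_le_left (le_max_left _ _))
  have hb0 : x2 ≤ max (max (max x3 x2) x1) 0 := le_max_of_le_left (le_max_of_le_left (le_max_right _ _))
  have hc0 : x1 ≤ max (max (max x3 x2) x1) 0 := le_max_of_le_left (le_max_right _ _)
  have hd0 : (0:ℝ) ≤ max (max (max x3 x2) x1) 0 := le_max_right _ _
  have ha1 : x4 ≤ max (max (max x4 x3) x2) 0 := le_max_of_le_left (le_max_of_le_left (le_max_left _ _))
  have hb1 : x3 ≤ max (max (max x4 x3) x2) 0 := le_max_of_le_left (le_max_of_le_left (le_max_right _ _))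
  have hc1 : x2 ≤ max (max (max x4 x3) x2) 0 := le_max_of_le_left (le_max_right _ _)
  have hd1 : (0:ℝ) ≤ max (max (max x4 x3) x2) 0 := le_max_right _ _
  have ha2 : x5 ≤ max (max (max x5 x4) x3) 0 := le_max_of_le_left (le_max_of_le_left (le_max_left _ _))
  have hb2 : x4 ≤ max (max (max x5 x4) x3) 0 := le_max_of_le_left (le_max_of_le_left (le_max_right _ _))
  have hc2 : x3 ≤ max (max (max x5 x4) x3) 0 := le_max_of_le_left (le_max_right _ _)
  have hd2 : (0:ℝ) ≤ max (max (max x5 x4) x3) 0 := le_max_right _ _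
  have ha3 : x6 ≤ max (max (max x6 x5) x4) 0 := le_max_of_le_left (le_max_of_le_left (le_max_left _ _))
  have hb3 : x5 ≤ max (max (max x6 x5) x4) 0 := le_max_of_le_left (le_max_of_le_left (le_max_right _ _))
  have hc3 : x4 ≤ max (max (max x6 x5) x4) 0 := le_max_of_le_left (le_max_right _ _)
  have hd3 : (0:ℝ) ≤ max (max (max x6 x5) x4) 0 := le_max_right _ _
  have ha4 : x7 ≤ max (max (max x7 x6) x5) 0 := le_max_of_le_left (le_max_of_le_left (le_max_left _ _))
  have hb4 : x6 ≤ max (max (max x7 x6) x5) 0 := le_max_of_le_left (le_max_of_le_left (le_max_right _ _))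
  have hc4 : x5 ≤ max (max (max x7 x6) x5) 0 := le_max_of_le_left (le_max_right _ _)
  have hd4 : (0:ℝ) ≤ max (max (max x7 x6) x5) 0 := le_max_right _ _
  have ha5 : x8 ≤ max (max (max x8 x7) x6) 0 := le_max_of_le_left (le_max_of_le_left (le_max_left _ _))
  have hb5 : x7 ≤ max (max (max x8 x7) x6) 0 := le_max_of_le_left (le_max_of_le_left (le_max_right _ _))
  have hc5 : x6 ≤ max (max (max x8 x7) x6) 0 := le_max_of_le_left (le_max_right _ _)
  have hd5 : (0:ℝ) ≤ max (max (max x8 x7) x6) 0 := le_max_right _ _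
  have ha6 : x9 ≤ max (max (max x9 x8) x7) 0 := le_max_of_le_left (le_max_of_le_left (le_max_left _ _))
  have hb6 : x8 ≤ max (max (max x9 x8) x7) 0 := le_max_of_le_left (le_max_of_le_left (le_max_right _ _))
  have hc6 : x7 ≤ max (max (max x9 x8) x7) 0 := le_max_of_le_left (le_max_right _ _)
  have hd6 : (0:ℝ) ≤ max (max (max x9 x8) x7) 0 := le_max_right _ _
  have ha7 : x10 ≤ max (max (max x10 x9) x8) 0 := le_max_of_le_left (le_max_of_le_left (le_max_left _ _))
  have hb7 : x9 ≤ max (max (max x10 x9) x8) 0 := le_max_of_le_left (le_max_of_le_left (le_max_right _ _))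
  have hc7 : x8 ≤ max (max (max x10 x9) x8) 0 := le_max_of_le_left (le_max_right _ _)
  have hd7 : (0:ℝ) ≤ max (max (max x10 x9) x8) 0 := le_max_right _ _
  rcases max4_choice x10 x9 x8 with hm7 | hm7 | hm7 | hm7
  · -- case 0
    rcases max4_choice x5 x4 x3 with hm2 | hm2 | hm2 | hm2
    · -- case 0
      exact (Or.inr (Or.inr (Or.inr (Or.inr (Or.inr (Or.inr (Or.inr (Or.inr (Or.inr (Or.inr (Or.inl (by linarith))))))))))))
    · -- case 1
      exact (Or.inr (Or.inr (Or.inr (Or.inr (Or.inr (Or.inr (Or.inr (Or.inr (Or.inr (Or.inr (Or.inl (by linarith))))))))))))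
    · -- case 2
      rcases max4_choice x4 x3 x2 with hm1 | hm1 | hm1 | hm1
      · -- case 0
        exact (Or.inr (Or.inr (Or.inr (Or.inr (Or.inr (Or.inr (Or.inr (Or.inr (Or.inr (Or.inr (Or.inl (by linarith))))))))))))
      · -- case 1
        rcases max4_choice x9 x8 x7 with hm6 | hm6 | hm6 | hm6
        · -- case 0
          rcases max4_choice x8 x7 x6 with hm5 | hm5 | hm5 | hm5
          · -- case 0
            rcases max4_choice x7 x6 x5 with hm4 | hm4 | hm4 | hm4
            · -- case 0
              exact (Or.inl (by linarith))
            · -- case 1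
              exact (Or.inl (by linarith))
            · -- case 2
              exact (Or.inl (by linarith))
            · -- case 3
              exact (Or.inl (by linarith))
          · -- case 1
            exact (Or.inl (by linarith))
          · -- case 2
            exact (Or.inl (by linarith))
          · -- case 3
            exact (Or.inl (by linarith))
        · -- case 1
          rcases max4_choice x7 x6 x5 with hm4 | hm4 | hm4 | hm4
          · -- case 0
            exact (Or.inl (by linarith))
          · -- case 1
            exact (Or.inl (by linarith))
          · -- case 2
            exact (Or.inl (by linarith))
          · -- case 3
            exact (Or.inl (by linarith))
        · -- case 2
          exact (Or.inl (by linarith))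
        · -- case 3
          exact (Or.inl (by linarith))
      · -- case 2
        rcases max4_choice x9 x8 x7 with hm6 | hm6 | hm6 | hm6
        · -- case 0
          rcases max4_choice x8 x7 x6 with hm5 | hm5 | hm5 | hm5
          · -- case 0
            rcases max4_choice x7 x6 x5 with hm4 | hm4 | hm4 | hm4
            · -- case 0
              exact (Or.inl (by linarith))
            · -- case 1
              exact (Or.inl (by linarith))
            · -- case 2
              exact (Or.inl (by linarith))
            · -- case 3
              exact (Or.inl (by linarith))
          · -- case 1
            exact (Or.inl (by linarith))
          · -- case 2
            exact (Or.inl (by linarith))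
          · -- case 3
            exact (Or.inl (by linarith))
        · -- case 1
          rcases max4_choice x7 x6 x5 with hm4 | hm4 | hm4 | hm4
          · -- case 0
            exact (Or.inl (by linarith))
          · -- case 1
            exact (Or.inl (by linarith))
          · -- case 2
            exact (Or.inl (by linarith))
          · -- case 3
            exact (Or.inl (by linarith))
        · -- case 2
          exact (Or.inl (by linarith))
        · -- case 3
          exact (Or.inl (by linarith))
      · -- case 3
        exact (Or.inr (Or.inr (Or.inr (Or.inr (Or.inr (Or.inr (Or.inr (Or.inr (Or.inr (Or.inr (Or.inl (by linarith))))))))))))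
    · -- case 3
      exact (Or.inr (Or.inr (Or.inr (Or.inr (Or.inr (Or.inr (Or.inr (Or.inr (Or.inr (Or.inr (Or.inl (by linarith))))))))))))
  · -- case 1
    rcases max4_choice x5 x4 x3 with hm2 | hm2 | hm2 | hm2
    · -- case 0
      exact (Or.inr (Or.inr (Or.inr (Or.inr (Or.inr (Or.inr (Or.inr (Or.inr (Or.inr (Or.inl (by linarith)))))))))))
    · -- case 1
      exact (Or.inr (Or.inr (Or.inr (Or.inr (Or.inr (Or.inr (Or.inr (Or.inr (Or.inr (Or.inl (by linarith)))))))))))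
    · -- case 2
      rcases max4_choice x8 x7 x6 with hm5 | hm5 | hm5 | hm5
      · -- case 0
        rcases max4_choice x7 x6 x5 with hm4 | hm4 | hm4 | hm4
        · -- case 0
          exact (Or.inl (by linarith))
        · -- case 1
          exact (Or.inl (by linarith))
        · -- case 2
          exact (Or.inl (by linarith))
        · -- case 3
          exact (Or.inl (by linarith))
      · -- case 1
        exact (Or.inl (by linarith))
      · -- case 2
        exact (Or.inr (Or.inl (by linarith)))
      · -- case 3
        exact (Or.inl (by linarith))
    · -- case 3
      exact (Or.inr (Or.inr (Or.inr (Or.inr (Or.inr (Or.inr (Or.inr (Or.inr (Or.inr (Or.inl (by linarith)))))))))))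
  · -- case 2
    rcases max4_choice x7 x6 x5 with hm4 | hm4 | hm4 | hm4
    · -- case 0
      exact (Or.inl (by linarith))
    · -- case 1
      exact (Or.inl (by linarith))
    · -- case 2
      exact (Or.inl (by linarith))
    · -- case 3
      exact (Or.inl (by linarith))
  · -- case 3
    exact (Or.inl (by linarith))
lemma sol_upper (c : ℝ × ℝ × ℝ × ℝ) :
    ∀ n, 1 ≤ n → sol c n ≤ max (max (max (max (max (max (max (max (max (max (max (sol c 1) (sol c 2)) (sol c 3)) (sol c 4)) (sol c 5)) (sol c 6)) (sol c 7)) (sol c 8)) (sol c 9)) (sol c 10)) (sol c 11)) 0 := by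
  set M : ℝ := max (max (max (max (max (max (max (max (max (max (max (sol c 1) (sol c 2)) (sol c 3)) (sol c 4)) (sol c 5)) (sol c 6)) (sol c 7)) (sol c 8)) (sol c 9)) (sol c 10)) (sol c 11)) 0 with hM
  have g1 : sol c 1 ≤ M := le_max_of_le_left (le_max_of_le_left (le_max_of_le_left (le_max_of_le_left (le_max_of_le_left (le_max_of_le_left (le_max_of_le_left (le_max_of_le_left (le_max_of_le_left (le_max_of_le_left (le_max_left _ _))))))))))
  have g2 : sol c 2 ≤ M := le_max_of_le_left (le_max_of_le_left (le_max_of_le_left (le_max_of_le_left (le_max_of_le_left (le_max_of_le_left (le_max_of_le_left (le_max_of_le_left (le_max_of_le_left (le_max_of_le_left (le_max_right _ _))))))))))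
  have g3 : sol c 3 ≤ M := le_max_of_le_left (le_max_of_le_left (le_max_of_le_left (le_max_of_le_left (le_max_of_le_left (le_max_of_le_left (le_max_of_le_left (le_max_of_le_left (le_max_of_le_left (le_max_right _ _)))))))))
  have g4 : sol c 4 ≤ M := le_max_of_le_left (le_max_of_le_left (le_max_of_le_left (le_max_of_le_left (le_max_of_le_left (le_max_of_le_left (le_max_of_le_left (le_max_of_le_left (le_max_right _ _))))))))
  have g5 : sol c 5 ≤ M := le_max_of_le_left (le_max_of_le_left (le_max_of_le_left (le_max_of_le_left (le_max_of_le_left (le_max_of_le_left (le_max_of_le_left (le_max_right _ _)))))))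
  have g6 : sol c 6 ≤ M := le_max_of_le_left (le_max_of_le_left (le_max_of_le_left (le_max_of_le_left (le_max_of_le_left (le_max_of_le_left (le_max_right _ _))))))
  have g7 : sol c 7 ≤ M := le_max_of_le_left (le_max_of_le_left (le_max_of_le_left (le_max_of_le_left (le_max_of_le_left (le_max_right _ _)))))
  have g8 : sol c 8 ≤ M := le_max_of_le_left (le_max_of_le_left (le_max_of_le_left (le_max_of_le_left (le_max_right _ _))))
  have g9 : sol c 9 ≤ M := le_max_of_le_left (le_max_of_le_left (le_max_of_le_left (le_max_right _ _)))
  have g10 : sol c 10 ≤ M := le_max_of_le_left (le_max_of_le_left (le_max_right _ _))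
  have g11 : sol c 11 ≤ M := le_max_of_le_left (le_max_right _ _)
  have g0 : (0:ℝ) ≤ M := le_max_right _ _
  intro n
  induction n using Nat.strong_induction_on with
  | _ n ih =>
    intro h1
    by_cases h : n ≤ 11
    · interval_cases n
      · exact g1
      · exact g2
      · exact g3
      · exact g4
      · exact g5
      · exact g6
      · exact g7
      · exact g8
      · exact g9
      · exact g10
      · exact g11
    · obtain ⟨m, rfl⟩ : ∃ m, n = m + 11 := ⟨n - 11, by omega⟩
      have hm : 1 ≤ m := by omega
      have r0 : sol c (m + 4) = max (max (max (sol c (m + 3)) (sol c (m + 2))) (sol c (m + 1))) 0 - sol c m := by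
        exact sol_rec c m hm
      have r1 : sol c (m + 5) = max (max (max (sol c (m + 4)) (sol c (m + 3))) (sol c (m + 2))) 0 - sol c (m + 1) := by
        have h := sol_rec c (m + 1) (by omega)
        rw [show m + 1 + 4 = m + 5 from by omega] at h
        rw [show m + 1 + 3 = m + 4 from by omega] at h
        rw [show m + 1 + 2 = m + 3 from by omega] at h
        rw [show m + 1 + 1 = m + 2 from by omega] at h
        exact h
      have r2 : sol c (m + 6) = max (max (max (sol c (m + 5)) (sol c (m + 4))) (sol c (m + 3))) 0 - sol c (m + 2) := by
        have h := sol_rec c (m + 2) (by omega)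
        rw [show m + 2 + 4 = m + 6 from by omega] at h
        rw [show m + 2 + 3 = m + 5 from by omega] at h
        rw [show m + 2 + 2 = m + 4 from by omega] at h
        rw [show m + 2 + 1 = m + 3 from by omega] at h
        exact h
      have r3 : sol c (m + 7) = max (max (max (sol c (m + 6)) (sol c (m + 5))) (sol c (m + 4))) 0 - sol c (m + 3) := by
        have h := sol_rec c (m + 3) (by omega)
        rw [show m + 3 + 4 = m + 7 from by omega] at h
        rw [show m + 3 + 3 = m + 6 from by omega] at h
        rw [show m + 3 + 2 = m + 5 from by omega] at h
        rw [show m + 3 + 1 = m + 4 from by omega] at h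
        exact h
      have r4 : sol c (m + 8) = max (max (max (sol c (m + 7)) (sol c (m + 6))) (sol c (m + 5))) 0 - sol c (m + 4) := by
        have h := sol_rec c (m + 4) (by omega)
        rw [show m + 4 + 4 = m + 8 from by omega] at h
        rw [show m + 4 + 3 = m + 7 from by omega] at h
        rw [show m + 4 + 2 = m + 6 from by omega] at h
        rw [show m + 4 + 1 = m + 5 from by omega] at h
        exact h
      have r5 : sol c (m + 9) = max (max (max (sol c (m + 8)) (sol c (m + 7))) (sol c (m + 6))) 0 - sol c (m + 5) := by
        have h := sol_rec c (m + 5) (by omega)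
        rw [show m + 5 + 4 = m + 9 from by omega] at h
        rw [show m + 5 + 3 = m + 8 from by omega] at h
        rw [show m + 5 + 2 = m + 7 from by omega] at h
        rw [show m + 5 + 1 = m + 6 from by omega] at h
        exact h
      have r6 : sol c (m + 10) = max (max (max (sol c (m + 9)) (sol c (m + 8))) (sol c (m + 7))) 0 - sol c (m + 6) := by
        have h := sol_rec c (m + 6) (by omega)
        rw [show m + 6 + 4 = m + 10 from by omega] at h
        rw [show m + 6 + 3 = m + 9 from by omega] at h
        rw [show m + 6 + 2 = m + 8 from by omega] at h
        rw [show m + 6 + 1 = m + 7 from by omega] at h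
        exact h
      have r7 : sol c (m + 11) = max (max (max (sol c (m + 10)) (sol c (m + 9))) (sol c (m + 8))) 0 - sol c (m + 7) := by
        have h := sol_rec c (m + 7) (by omega)
        rw [show m + 7 + 4 = m + 11 from by omega] at h
        rw [show m + 7 + 3 = m + 10 from by omega] at h
        rw [show m + 7 + 2 = m + 9 from by omega] at h
        rw [show m + 7 + 1 = m + 8 from by omega] at h
        exact h
      rcases key (sol c m) (sol c (m+1)) (sol c (m+2)) (sol c (m+3)) (sol c (m+4)) (sol c (m+5)) (sol c (m+6)) (sol c (m+7)) (sol c (m+8)) (sol c (m+9)) (sol c (m+10)) (sol c (m+11)) r0 r1 r2 r3 r4 r5 r6 r7 with h'|h'|h'|h'|h'|h'|h'|h'|h'|h'|h'|h'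
      · exact le_trans h' (ih m (by omega) (by omega))
      · exact le_trans h' (ih (m + 1) (by omega) (by omega))
      · exact le_trans h' (ih (m + 2) (by omega) (by omega))
      · exact le_trans h' (ih (m + 3) (by omega) (by omega))
      · exact le_trans h' (ih (m + 4) (by omega) (by omega))
      · exact le_trans h' (ih (m + 5) (by omega) (by omega))
      · exact le_trans h' (ih (m + 6) (by omega) (by omega))
      · exact le_trans h' (ih (m + 7) (by omega) (by omega))
      · exact le_trans h' (ih (m + 8) (by omega) (by omega))
      · exact le_trans h' (ih (m + 9) (by omega) (by omega))
      · exact le_trans h' (ih (m + 10) (by omega) (by omega))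
      · exact le_trans h' g0
lemma sol_bounded (c : ℝ × ℝ × ℝ × ℝ) : ∃ B : ℝ, ∀ n, 1 ≤ n → |sol c n| ≤ B := by
  have upper := sol_upper c
  set M : ℝ := max (max (max (max (max (max (max (max (max (max (max (sol c 1) (sol c 2)) (sol c 3)) (sol c 4)) (sol c 5)) (sol c 6)) (sol c 7)) (sol c 8)) (sol c 9)) (sol c 10)) (sol c 11)) 0 with hM
  refine ⟨max M (max |sol c 1| (max |sol c 2| (max |sol c 3| |sol c 4|))), ?_⟩
  have hMB : M ≤ max M (max |sol c 1| (max |sol c 2| (max |sol c 3| |sol c 4|))) := le_max_left _ _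
  intro n h1
  by_cases h : n ≤ 4
  · interval_cases n
    · exact le_max_of_le_right (le_max_left _ _)
    · exact le_max_of_le_right (le_max_of_le_right (le_max_left _ _))
    · exact le_max_of_le_right (le_max_of_le_right (le_max_of_le_right (le_max_left _ _)))
    · exact le_max_of_le_right (le_max_of_le_right (le_max_of_le_right (le_max_right _ _)))
  · obtain ⟨m, rfl⟩ : ∃ m, n = m + 4 := ⟨n - 4, by omega⟩
    have hm : 1 ≤ m := by omega
    have r := sol_rec c m hm
    have h0 : (0:ℝ) ≤ max (max (max (sol c (m+3)) (sol c (m+2))) (sol c (m+1))) 0 := le_max_right _ _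
    have hup : sol c (m+4) ≤ M := upper (m+4) (by omega)
    have hlow : sol c m ≤ M := upper m (by omega)
    rw [abs_le]
    constructor
    · linarith
    · linarith

lemma sol_dyadic (c : ℝ × ℝ × ℝ × ℝ) (D : ℝ)
    (h1 : ∃ k : ℤ, sol c 1 = k / D) (h2 : ∃ k : ℤ, sol c 2 = k / D)
    (h3 : ∃ k : ℤ, sol c 3 = k / D) (h4 : ∃ k : ℤ, sol c 4 = k / D) :
    ∀ n, ∃ k : ℤ, sol c n = k / D := by
  have hmax : ∀ a b : ℝ, (∃ k : ℤ, a = k / D) → (∃ k : ℤ, b = k / D) →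
      ∃ k : ℤ, max a b = k / D := by
    intro a b ⟨k1, hk1⟩ ⟨k2, hk2⟩
    rcases max_choice a b with h | h
    · exact ⟨k1, by rw [h, hk1]⟩
    · exact ⟨k2, by rw [h, hk2]⟩
  intro n
  induction n using Nat.strong_induction_on with
  | _ n ih =>
    match n with
    | 0 => exact ⟨0, by simp [sol]⟩
    | 1 => exact h1
    | 2 => exact h2
    | 3 => exact h3
    | 4 => exact h4
    | (m + 5) =>
      obtain ⟨k4, e4⟩ := ih (m + 4) (by omega)
      obtain ⟨k3, e3⟩ := ih (m + 3) (by omega)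
      obtain ⟨k2, e2⟩ := ih (m + 2) (by omega)
      obtain ⟨k1, e1⟩ := ih (m + 1) (by omega)
      obtain ⟨k, hk⟩ := hmax _ _ (hmax _ _ (hmax _ _ ⟨k4, e4⟩ ⟨k3, e3⟩) ⟨k2, e2⟩)
        (⟨(0:ℤ), by norm_num⟩ : ∃ k : ℤ, (0:ℝ) = (k:ℝ) / D)
      refine ⟨k - k1, ?_⟩
      show max (max (max (sol c (m + 4)) (sol c (m + 3))) (sol c (m + 2))) 0 - sol c (m + 1)
          = ((k - k1 : ℤ) : ℝ) / D
      rw [hk, e1]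
      push_cast
      ring

def StateEq (c : ℝ × ℝ × ℝ × ℝ) (p m : ℕ) : Prop :=
  sol c (m + p) = sol c m ∧ sol c (m + 1 + p) = sol c (m + 1) ∧
  sol c (m + 2 + p) = sol c (m + 2) ∧ sol c (m + 3 + p) = sol c (m + 3)

lemma periodic_of_state_eq (c : ℝ × ℝ × ℝ × ℝ) (n1 p : ℕ) (h1 : 1 ≤ n1) (hp : 1 ≤ p)
    (hQ : StateEq c p n1) : IsPeriodOf p (sol c) := by
  have fwd : ∀ m, 1 ≤ m → StateEq c p m → StateEq c p (m + 1) := by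
    intro m hm ⟨q0, q1, q2, q3⟩
    refine ⟨?_, ?_, ?_, ?_⟩
    · rw [show m + 1 + p = m + 1 + p from rfl]; exact q1
    · rw [show m + 1 + 1 = m + 2 from by omega]; exact q2
    · rw [show m + 1 + 2 = m + 3 from by omega]; exact q3
    · rw [show m + 1 + 3 = m + 4 from by omega]
      have rA := sol_rec c (m + p) (by omega)
      have rB := sol_rec c m hm
      rw [show m + 4 + p = m + p + 4 from by omega, rA, rB,
        show m + p + 3 = m + 3 + p from by omega, show m + p + 2 = m + 2 + p from by omega,
        show m + p + 1 = m + 1 + p from by omega, q3, q2, q1, q0]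
  have bwd : ∀ m, 1 ≤ m → StateEq c p (m + 1) → StateEq c p m := by
    intro m hm ⟨q1, q2, q3, q4⟩
    rw [show m + 1 + 1 = m + 2 from by omega] at q2
    rw [show m + 1 + 2 = m + 3 from by omega] at q3
    rw [show m + 1 + 3 = m + 4 from by omega] at q4
    refine ⟨?_, q1, q2, q3⟩
    have rA := sol_rec c (m + p) (by omega)
    have rB := sol_rec c m hm
    rw [show m + p + 3 = m + 3 + p from by omega, show m + p + 2 = m + 2 + p from by omega,
      show m + p + 1 = m + 1 + p from by omega, q3, q2, q1,
      show m + p + 4 = m + 4 + p from by omega, q4] at rA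
    linarith [rA, rB]
  have up : ∀ d, StateEq c p (n1 + d) := by
    intro d
    induction d with
    | zero => exact hQ
    | succ d ihd => exact (show n1 + (d+1) = (n1 + d) + 1 from by omega) ▸ fwd (n1 + d) (by omega) ihd
  have down : ∀ j, j ≤ n1 - 1 → StateEq c p (n1 - j) := by
    intro j
    induction j with
    | zero => intro _; simpa using hQ
    | succ j ihj =>
      intro hj
      have prev := ihj (by omega)
      have heq : n1 - j = (n1 - (j + 1)) + 1 := by omega
      rw [heq] at prev
      exact bwd (n1 - (j + 1)) (by omega) prev
  refine ⟨hp, fun n hn => ?_⟩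
  rcases le_or_gt n1 n with h | h
  · obtain ⟨d, rfl⟩ : ∃ d, n = n1 + d := ⟨n - n1, by omega⟩
    exact (up d).1
  · have := down (n1 - n) (by omega)
    rw [show n1 - (n1 - n) = n from by omega] at this
    exact this.1
lemma rational_periodic (q1 q2 q3 q4 : ℚ) :
    ∃ p, IsPeriodOf p (sol ((q1:ℝ), (q2:ℝ), (q3:ℝ), (q4:ℝ))) := by
  set c : ℝ × ℝ × ℝ × ℝ := ((q1:ℝ), (q2:ℝ), (q3:ℝ), (q4:ℝ)) with hc
  obtain ⟨B, hB⟩ := sol_bounded c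
  have d1 : (0:ℝ) < q1.den := by exact_mod_cast q1.den_pos
  have d2 : (0:ℝ) < q2.den := by exact_mod_cast q2.den_pos
  have d3 : (0:ℝ) < q3.den := by exact_mod_cast q3.den_pos
  have d4 : (0:ℝ) < q4.den := by exact_mod_cast q4.den_pos
  set D : ℝ := (q1.den : ℝ) * q2.den * q3.den * q4.den with hD
  have hD0 : 0 < D := by positivity
  have e1 : sol c 1 = ((q1.num * (q2.den * q3.den * q4.den) : ℤ) : ℝ) / D := by
    show (q1 : ℝ) = _
    rw [Rat.cast_def]
    push_cast
    rw [div_eq_div_iff (by positivity) (by positivity)]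
    ring
  have e2 : sol c 2 = ((q2.num * (q1.den * q3.den * q4.den) : ℤ) : ℝ) / D := by
    show (q2 : ℝ) = _
    rw [Rat.cast_def]
    push_cast
    rw [div_eq_div_iff (by positivity) (by positivity)]
    ring
  have e3 : sol c 3 = ((q3.num * (q1.den * q2.den * q4.den) : ℤ) : ℝ) / D := by
    show (q3 : ℝ) = _
    rw [Rat.cast_def]
    push_cast
    rw [div_eq_div_iff (by positivity) (by positivity)]
    ring
  have e4 : sol c 4 = ((q4.num * (q1.den * q2.den * q3.den) : ℤ) : ℝ) / D := by
    show (q4 : ℝ) = _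
    rw [Rat.cast_def]
    push_cast
    rw [div_eq_div_iff (by positivity) (by positivity)]
    ring
  have hk := sol_dyadic c D ⟨_, e1⟩ ⟨_, e2⟩ ⟨_, e3⟩ ⟨_, e4⟩
  set K : ℤ := ⌈B * D⌉ with hK
  set T : Set ℝ := (fun k : ℤ => (k : ℝ) / D) '' ↑(Finset.Icc (-K) K) with hT
  have hTfin : T.Finite := (Finset.Icc (-K) K).finite_toSet.image _
  have hmem : ∀ m, 1 ≤ m → sol c m ∈ T := by
    intro m hm
    obtain ⟨k, hkm⟩ := hk m
    refine ⟨k, ?_, hkm.symm⟩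
    simp only [Finset.coe_Icc, Set.mem_Icc]
    have habs := hB m hm
    rw [hkm, abs_div, abs_of_pos hD0, div_le_iff₀ hD0] at habs
    have hBD : B * D ≤ (K : ℝ) := Int.le_ceil _
    have habs2 : |(k : ℝ)| ≤ (K : ℝ) := le_trans habs hBD
    rw [abs_le] at habs2
    constructor
    · exact_mod_cast habs2.1
    · exact_mod_cast habs2.2
  have hinf : (Set.Ici 1 : Set ℕ).Infinite := Set.Ici_infinite 1
  have hmap : Set.MapsTo (fun n => (sol c n, sol c (n+1), sol c (n+2), sol c (n+3)))
      (Set.Ici 1) (T ×ˢ T ×ˢ T ×ˢ T) := by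
    intro n hn
    have h1n : 1 ≤ n := hn
    exact ⟨hmem n h1n, hmem (n+1) (by omega), hmem (n+2) (by omega), hmem (n+3) (by omega)⟩
  obtain ⟨n1, hn1, n2, hn2, hne, heq⟩ :=
    hinf.exists_ne_map_eq_of_mapsTo hmap (hTfin.prod (hTfin.prod (hTfin.prod hTfin)))
  simp only [Prod.mk.injEq] at heq
  have main : ∀ a b : ℕ, 1 ≤ a → a < b →
      (sol c (a + (b - a)) = sol c a) → (sol c (a+1 + (b - a)) = sol c (a+1)) →
      (sol c (a+2 + (b - a)) = sol c (a+2)) → (sol c (a+3 + (b - a)) = sol c (a+3)) →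
      ∃ p, IsPeriodOf p (sol c) := by
    intro a b ha hab E0 E1 E2 E3
    exact ⟨b - a, periodic_of_state_eq c a (b - a) ha (by omega) ⟨E0, E1, E2, E3⟩⟩
  have h1n1 : 1 ≤ n1 := hn1
  have h1n2 : 1 ≤ n2 := hn2
  rcases lt_or_gt_of_ne hne with h | h
  · refine main n1 n2 h1n1 h ?_ ?_ ?_ ?_ <;>
      [skip; skip; skip; skip] <;>
      [rw [show n1 + (n2 - n1) = n2 from by omega]; rw [show n1+1 + (n2 - n1) = n2+1 from by omega];
       rw [show n1+2 + (n2 - n1) = n2+2 from by omega]; rw [show n1+3 + (n2 - n1) = n2+3 from by omega]] <;>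
      [exact heq.1.symm; exact heq.2.1.symm; exact heq.2.2.1.symm; exact heq.2.2.2.symm]
  · refine main n2 n1 h1n2 h ?_ ?_ ?_ ?_ <;>
      [rw [show n2 + (n1 - n2) = n1 from by omega]; rw [show n2+1 + (n1 - n2) = n1+1 from by omega];
       rw [show n2+2 + (n1 - n2) = n1+2 from by omega]; rw [show n2+3 + (n1 - n2) = n1+3 from by omega]] <;>
      [exact heq.1; exact heq.2.1; exact heq.2.2.1; exact heq.2.2.2]
lemma isClosed_period (p : ℕ) : IsClosed {c' : ℝ × ℝ × ℝ × ℝ | IsPeriodOf p (sol c')} := by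
  by_cases hp : 1 ≤ p
  · have hset : {c' : ℝ × ℝ × ℝ × ℝ | IsPeriodOf p (sol c')} =
        ⋂ n ∈ Set.Ici 1, {c' : ℝ × ℝ × ℝ × ℝ | sol c' (n + p) = sol c' n} := by
      ext c'
      simp only [Set.mem_setOf_eq, Set.mem_iInter, IsPeriodOf, Set.mem_Ici]
      constructor
      · intro h n hn; exact h.2 n hn
      · intro h; exact ⟨hp, h⟩
    rw [hset]
    exact isClosed_biInter fun n _ => isClosed_eq (sol_continuous (n + p)) (sol_continuous n)
  · have hset : {c' : ℝ × ℝ × ℝ × ℝ | IsPeriodOf p (sol c')} = ∅ := by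
      ext c'; simp only [Set.mem_setOf_eq, Set.mem_empty_iff_false, iff_false]
      intro h; exact hp h.1
    rw [hset]; exact isClosed_empty

theorem stmt_13 (c : ℝ × ℝ × ℝ × ℝ) (hnp : ¬ ∃ p, IsPeriodOf p (sol c)) :
    ∀ V ∈ nhds c, ∀ N : ℕ, ∃ c' ∈ V,
      (∃ p, IsPeriodOf p (sol c')) ∧ ∀ p, IsPeriodOf p (sol c') → N < p := by
  intro V hV N
  set S : Set (ℝ × ℝ × ℝ × ℝ) := ⋃ p ∈ Finset.Iic N, {c' | IsPeriodOf p (sol c')} with hS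
  have hSclosed : IsClosed S :=
    (Finset.Iic N).finite_toSet.isClosed_biUnion fun p _ => isClosed_period p
  have hcS : c ∉ S := by
    intro h
    simp only [hS, Set.mem_iUnion, Finset.mem_coe, Finset.mem_Iic, Set.mem_setOf_eq] at h
    obtain ⟨p, _, hp⟩ := h
    exact hnp ⟨p, hp⟩
  have hU : V ∩ Sᶜ ∈ nhds c :=
    Filter.inter_mem hV (hSclosed.isOpen_compl.mem_nhds hcS)
  obtain ⟨O, hOsub, hOopen, hcO⟩ := mem_nhds_iff.mp hU
  have hdense : DenseRange (fun q : ℚ × ℚ × ℚ × ℚ =>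
      (((q.1 : ℝ), (q.2.1 : ℝ), (q.2.2.1 : ℝ), (q.2.2.2 : ℝ)) : ℝ × ℝ × ℝ × ℝ)) := by
    have : DenseRange (Prod.map (fun q : ℚ => (q : ℝ))
        (Prod.map (fun q : ℚ => (q : ℝ)) (Prod.map (fun q : ℚ => (q : ℝ)) (fun q : ℚ => (q : ℝ))))) :=
      Rat.denseRange_cast.prodMap (Rat.denseRange_cast.prodMap
        (Rat.denseRange_cast.prodMap Rat.denseRange_cast))
    exact this
  obtain ⟨q, hq⟩ := hdense.exists_mem_open hOopen ⟨c, hcO⟩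
  obtain ⟨q1, q2, q3, q4⟩ := q
  refine ⟨((q1 : ℝ), (q2 : ℝ), (q3 : ℝ), (q4 : ℝ)), (hOsub hq).1, rational_periodic q1 q2 q3 q4, ?_⟩
  intro p hp
  by_contra hle
  push_neg at hle
  have : ((q1 : ℝ), (q2 : ℝ), (q3 : ℝ), (q4 : ℝ)) ∈ S := by
    simp only [hS, Set.mem_iUnion, Finset.mem_coe, Finset.mem_Iic, Set.mem_setOf_eq]
    exact ⟨p, hle, hp⟩
  exact (hOsub hq).2 this
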